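/- The 3×3 matrix R = (1/2)[[1,√2,1],[√2,0,-√2],[1,-√2,1]] (the restriction of H⊗H to the symmetric subspace) is not a qutrit Clifford gate: R X₃ R† is not an element of the qutrit Pauli group, i.e., R X₃ R† is not of the form ω^c X₃^a Z₃^b for any a, b, c ∈ Z (where here the phase may range over all powers of ω = exp(2πi/3) times cube roots of unity, equivalently R X₃ R† ∉ {λ X₃^a Z₃^b : a,b ∈ Z₃, λ ∈ C, |λ|=1}). -/

import Mathlib

open Matrix

/-- The primitive cube root of unity `ω = exp(2πi/3)`. -/
noncomputable def omega3 : ℂ := Complex.exp (2 * Real.pi * Complex.I / 3)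

/-- The qutrit cyclic-shift Pauli `X₃`. -/
def X3 : Matrix (Fin 3) (Fin 3) ℂ :=
  Matrix.of fun i j => if i = j + 1 then 1 else 0

/-- The qutrit clock Pauli `Z₃ = diag(1, ω, ω²)`. -/
noncomputable def Z3 : Matrix (Fin 3) (Fin 3) ℂ :=
  Matrix.diagonal fun s : Fin 3 => omega3 ^ (s : ℕ)

/-- The matrix `R = (1/2)[[1,√2,1],[√2,0,-√2],[1,-√2,1]]`
(the restriction of `H ⊗ H` to the symmetric subspace). -/
noncomputable def Rmat : Matrix (Fin 3) (Fin 3) ℂ :=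
  (2 : ℂ)⁻¹ • !![1, (Real.sqrt 2 : ℂ), 1;
                 (Real.sqrt 2 : ℂ), 0, -(Real.sqrt 2 : ℂ);
                 1, -(Real.sqrt 2 : ℂ), 1]

lemma X3_cube : X3 ^ 3 = 1 := by
  ext i j
  fin_cases i <;> fin_cases j <;>
    simp [X3, pow_succ, Matrix.mul_apply, Fin.sum_univ_three, Matrix.one_apply]

lemma X3_mod (a : ℕ) : X3 ^ a = X3 ^ (a % 3) := by
  conv_lhs => rw [← Nat.div_add_mod a 3]
  rw [pow_add, pow_mul, X3_cube, one_pow, one_mul]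

lemma abs_omega3 : ‖omega3‖ = 1 := by
  rw [omega3, Complex.norm_exp]
  norm_num [Complex.div_re, Complex.mul_re]

lemma entry02 : ‖(X3 ^ a) 0 2‖ = 0 ∨ ‖(X3 ^ a) 0 2‖ = 1 := by
  rw [X3_mod]
  have h : a % 3 < 3 := Nat.mod_lt _ (by norm_num)
  interval_cases h' : a % 3 <;>
    simp [X3, pow_succ, Matrix.mul_apply, Fin.sum_univ_three, Matrix.one_apply]

/-- `R` is not a qutrit Clifford gate: `R X₃ R†` is not in the qutrit Pauli group, i.e. it
is not of the form `λ X₃^a Z₃^b` for any unit-modulus phase `λ` and `a, b ∈ ℤ₃`. -/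
theorem stmt16 :
    ¬ ∃ (a b : ℕ) (lam : ℂ), ‖lam‖ = 1 ∧
      Rmat * X3 * Rmatᴴ = lam • (X3 ^ a * Z3 ^ b) := by

  rintro ⟨a, b, lam, hlam, heq⟩
  have h02 := congrFun (congrFun heq 0) 2
  have hX : X3 = !![0,0,1;1,0,0;0,1,0] := by
    ext i j
    fin_cases i <;> fin_cases j <;> rfl
  have hL : (Rmat * X3 * Rmatᴴ) 0 2 = 4⁻¹ := by
    have h2 : (Real.sqrt 2 : ℂ) * (Real.sqrt 2 : ℂ) = 2 := by
      rw [← Complex.ofReal_mul]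
      norm_num [Real.mul_self_sqrt]
    have h2' : (Real.sqrt 2 : ℂ) ^ 2 = 2 := by rw [sq]; exact h2
    simp [Rmat, hX, Matrix.mul_apply, Fin.sum_univ_three, Matrix.conjTranspose_apply,
      Matrix.smul_apply, Complex.conj_ofReal]
    ring_nf
    rw [show ((starRingEnd ℂ) 2) = 2 from map_ofNat _ 2]
    norm_num
  have hR : (X3 ^ a * Z3 ^ b) 0 2 = (X3 ^ a) 0 2 * (omega3 ^ 2) ^ b := by
    rw [Z3, Matrix.diagonal_pow, Matrix.mul_apply, Fin.sum_univ_three]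
    simp [Matrix.diagonal_apply, Pi.pow_apply, ← pow_mul, mul_comm]
  rw [hL, Matrix.smul_apply, hR, smul_eq_mul] at h02
  have := congrArg (‖·‖) h02
  simp only [norm_mul, norm_pow, hlam, abs_omega3, one_pow, one_mul, norm_inv,
    Complex.norm_ofNat] at this
  rcases entry02 (a := a) with h | h <;> rw [h] at this <;> norm_num at this
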